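/- Let Q be the probability measure on ℝ given by the mixture Q = (1/2)·δ₀ + (1/2)·P, where δ₀ is the point mass at 0 and P is the measure with density x ↦ 1/(π·x·(1 + (log x)²)) on (0, ∞) with respect to Lebesgue measure. For β < 0, let Z(β) := ∫ exp(β·x) dQ(x) and let Q_β be the probability measure with density x ↦ exp(β·x)/Z(β) with respect to Q. Then there exists a constant c > 0 such that for all β with −1/2 ≤ β < 0, the variance of Q_β satisfies Var(Q_β) ≥ c/(β²·(1 + (log(−β))²)). -/

import Mathlib

open MeasureTheory
open scoped ENNReal

/-- The exponentiated Cauchy distribution: the measure with density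
`x ↦ 1/(π·x·(1+(log x)²))` on `(0, ∞)` with respect to Lebesgue measure. -/
noncomputable def expCauchy : Measure ℝ :=
  volume.withDensity fun x : ℝ =>
    if 0 < x then ENNReal.ofReal (1 / (Real.pi * x * (1 + Real.log x ^ 2))) else 0

/-- `Q = (1/2)·δ₀ + (1/2)·(exponentiated Cauchy)`. -/
noncomputable def Qmix : Measure ℝ :=
  (1 / 2 : ℝ≥0∞) • Measure.dirac (0 : ℝ) + (1 / 2 : ℝ≥0∞) • expCauchy

/-- The partition function `Z(β) = ∫ exp(β·x) dQ(x)`. -/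
noncomputable def Zmix (β : ℝ) : ℝ := ∫ x, Real.exp (β * x) ∂Qmix

/-- The element of the exponential family based on `Q` with canonical parameter `β`:
the measure with density `x ↦ exp(β·x)/Z(β)` with respect to `Q`. -/
noncomputable def Qexp (β : ℝ) : Measure ℝ :=
  Qmix.withDensity fun x : ℝ => ENNReal.ofReal (Real.exp (β * x) / Zmix β)


open Set
open scoped NNReal


/-- real-valued density of `expCauchy`. -/
noncomputable def d (x : ℝ) : ℝ :=
  if 0 < x then 1 / (Real.pi * x * (1 + Real.log x ^ 2)) else 0

lemma d_nonneg (x : ℝ) : 0 ≤ d x := by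
  unfold d; split_ifs with h
  · positivity
  · exact le_refl 0

lemma d_meas : Measurable d := by
  unfold d
  exact Measurable.ite measurableSet_Ioi ((measurable_const.div ((measurable_const.mul measurable_id).mul
      (measurable_const.add (Real.measurable_log.pow_const 2))))) measurable_const

lemma fun_mea : Measurable (fun x => (d x).toNNReal) :=
  measurable_real_toNNReal.comp d_meas

lemma expCauchy_eq :
    expCauchy = volume.withDensity (fun x => ((d x).toNNReal : ℝ≥0∞)) := by
  unfold expCauchy d
  congr 1; funext x; split_ifs with h <;> simp [ENNReal.ofReal]

lemma integral_expCauchy (g : ℝ → ℝ) :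
    ∫ x, g x ∂expCauchy = ∫ x, d x * g x := by
  rw [expCauchy_eq,
    integral_withDensity_eq_integral_smul (fun_mea) g]
  congr 1; funext x
  simp only [NNReal.smul_def, Real.coe_toNNReal _ (d_nonneg x), smul_eq_mul]

lemma integrable_expCauchy_iff (g : ℝ → ℝ) :
    Integrable g expCauchy ↔ Integrable (fun x => d x * g x) volume := by
  rw [expCauchy_eq,
    integrable_withDensity_iff_integrable_smul (fun_mea)]
  constructor <;> intro h <;> refine h.congr (Filter.Eventually.of_forall fun x => ?_) <;>
    simp only [NNReal.smul_def, Real.coe_toNNReal _ (d_nonneg x), smul_eq_mul]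

lemma Ioi_eq_image : Set.Ioi (0:ℝ) = Real.exp '' Set.univ := by
  rw [Set.image_univ, Real.range_exp]

lemma cauchy_form :
    (fun x : ℝ => |Real.exp x| • (1 / (Real.pi * Real.exp x * (1 + Real.log (Real.exp x) ^ 2))))
      = fun x : ℝ => Real.pi⁻¹ * (1 + x ^ 2)⁻¹ := by
  funext x
  rw [Real.log_exp, abs_of_pos (Real.exp_pos x), smul_eq_mul]
  have h1 : Real.exp x ≠ 0 := (Real.exp_pos x).ne'
  have h2 : (1 : ℝ) + x ^ 2 ≠ 0 := by positivity
  field_simp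

lemma integrableOn_p :
    IntegrableOn (fun x : ℝ => 1 / (Real.pi * x * (1 + Real.log x ^ 2))) (Set.Ioi 0) := by
  rw [Ioi_eq_image, integrableOn_image_iff_integrableOn_abs_deriv_smul MeasurableSet.univ
      (fun x _ => (Real.hasDerivAt_exp x).hasDerivWithinAt) Real.exp_injective.injOn]
  rw [cauchy_form]
  exact (integrable_inv_one_add_sq.const_mul _).integrableOn

lemma integral_p :
    ∫ x in Set.Ioi (0:ℝ), 1 / (Real.pi * x * (1 + Real.log x ^ 2)) = 1 := by
  rw [Ioi_eq_image, integral_image_eq_integral_abs_deriv_smul MeasurableSet.univ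
      (fun x _ => (Real.hasDerivAt_exp x).hasDerivWithinAt) Real.exp_injective.injOn]
  rw [cauchy_form, Measure.restrict_univ, MeasureTheory.integral_const_mul, integral_univ_inv_one_add_sq,
    inv_mul_cancel₀ Real.pi_ne_zero]

lemma d_eq_indicator :
    d = Set.indicator (Set.Ioi 0) (fun x : ℝ => 1 / (Real.pi * x * (1 + Real.log x ^ 2))) := by
  funext x
  simp only [d, Set.indicator, Set.mem_Ioi]

lemma int_d : Integrable d := by
  rw [d_eq_indicator, integrable_indicator_iff measurableSet_Ioi]
  exact integrableOn_p

lemma integral_d : ∫ x, d x = 1 := by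
  rw [d_eq_indicator, integral_indicator measurableSet_Ioi, integral_p]
lemma d_le (x : ℝ) (hx : 0 < x) : d x ≤ 1 / (Real.pi * x) := by
  rw [d, if_pos hx]
  rw [div_le_div_iff₀ (by positivity) (by positivity)]
  nlinarith [mul_nonneg (mul_pos Real.pi_pos hx).le (sq_nonneg (Real.log x))]

/-- integrability helper: if `|d x * f x| ≤ c * exp ((β/2) x)` on `(0,∞)` then
`d * f` is integrable. -/
lemma int_helper {β : ℝ} (hβ : β < 0) (f : ℝ → ℝ) (hf : Measurable f) (c : ℝ)
    (h : ∀ x : ℝ, 0 < x → |d x * f x| ≤ c * Real.exp ((β/2) * x)) :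
    Integrable (fun x => d x * f x) volume := by
  have hmaj : Integrable
      (fun x => Set.indicator (Set.Ioi 0) (fun x => c * Real.exp (-(-(β/2)) * x)) x) volume := by
    rw [integrable_indicator_iff measurableSet_Ioi]
    exact ((exp_neg_integrableOn_Ioi 0 (by linarith : (0:ℝ) < -(β/2))).const_mul c)
  refine hmaj.mono ((d_meas.mul hf).aestronglyMeasurable)
    (Filter.Eventually.of_forall fun x => ?_)
  by_cases hx : 0 < x
  · rw [Set.indicator_of_mem (Set.mem_Ioi.mpr hx)]
    simp only [Real.norm_eq_abs, neg_neg]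
    exact le_trans (h x hx) (le_abs_self _)
  · have : d x = 0 := by rw [d, if_neg hx]
    simp [this]

lemma int0 {β : ℝ} (hβ : β < 0) :
    Integrable (fun x => d x * (x ^ 0 * Real.exp (β * x))) volume := by
  refine int_d.mono ((d_meas.mul (by fun_prop)).aestronglyMeasurable)
    (Filter.Eventually.of_forall fun x => ?_)
  simp only [pow_zero, one_mul, Real.norm_eq_abs]
  by_cases hx : 0 < x
  · rw [abs_of_nonneg (mul_nonneg (d_nonneg x) (Real.exp_pos _).le :
        (0:ℝ) ≤ d x * Real.exp (β * x)),
      abs_of_nonneg (d_nonneg x)]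
    nlinarith [d_nonneg x, Real.exp_le_one_iff.mpr (by nlinarith : β * x ≤ 0),
      Real.exp_pos (β * x)]
  · have : d x = 0 := by rw [d, if_neg hx]
    simp [this]

lemma int1 {β : ℝ} (hβ : β < 0) :
    Integrable (fun x => d x * (x ^ 1 * Real.exp (β * x))) volume := by
  refine int_helper hβ _ (by fun_prop) (1 / Real.pi) fun x hx => ?_
  rw [abs_of_nonneg (mul_nonneg (d_nonneg x) (by positivity) :
    (0:ℝ) ≤ d x * (x ^ 1 * Real.exp (β * x)))]
  have h1 : d x * (x ^ 1 * Real.exp (β * x)) ≤ (1 / Real.pi) * Real.exp (β * x) := by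
    have := d_le x hx
    have hex := (Real.exp_pos (β * x)).le
    rw [pow_one]
    calc d x * (x * Real.exp (β * x)) ≤ (1 / (Real.pi * x)) * (x * Real.exp (β * x)) :=
          mul_le_mul_of_nonneg_right (d_le x hx)
            (mul_nonneg hx.le (Real.exp_pos _).le)
      _ = (1 / Real.pi) * Real.exp (β * x) := by field_simp
  refine h1.trans ?_
  have : Real.exp (β * x) ≤ Real.exp ((β/2) * x) := Real.exp_le_exp.mpr (by nlinarith)
  have hpi : (0:ℝ) < 1 / Real.pi := by positivity
  nlinarith

lemma int2 {β : ℝ} (hβ : β < 0) :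
    Integrable (fun x => d x * (x ^ 2 * Real.exp (β * x))) volume := by
  refine int_helper hβ _ (by fun_prop) (2 / (-β * Real.pi)) fun x hx => ?_
  rw [abs_of_nonneg (mul_nonneg (d_nonneg x) (by positivity) :
    (0:ℝ) ≤ d x * (x ^ 2 * Real.exp (β * x)))]
  have hb : (0:ℝ) < -β := by linarith
  have hxe : x ≤ (2 / (-β)) * Real.exp ((-β/2) * x) := by
    have h2 : (-β/2) * x ≤ Real.exp ((-β/2) * x) := by
      nlinarith [Real.add_one_le_exp ((-β/2) * x)]
    calc x = (2 / (-β)) * ((-β/2) * x) := by field_simp [hβ.ne]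
      _ ≤ (2 / (-β)) * Real.exp ((-β/2) * x) :=
          mul_le_mul_of_nonneg_left h2 (div_pos two_pos hb).le
  calc d x * (x ^ 2 * Real.exp (β * x))
      ≤ (1 / (Real.pi * x)) * (x ^ 2 * Real.exp (β * x)) :=
        mul_le_mul_of_nonneg_right (d_le x hx) (by positivity)
    _ = (1 / Real.pi) * (x * Real.exp (β * x)) := by field_simp
    _ ≤ (1 / Real.pi) * (((2 / (-β)) * Real.exp ((-β/2) * x)) * Real.exp (β * x)) := by
        apply mul_le_mul_of_nonneg_left
          (mul_le_mul_of_nonneg_right hxe (Real.exp_pos _).le) (by positivity)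
    _ = (2 / (-β * Real.pi)) * (Real.exp ((-β/2) * x) * Real.exp (β * x)) := by ring
    _ = (2 / (-β * Real.pi)) * Real.exp ((β/2) * x) := by
        rw [← Real.exp_add]; congr 1; ring
noncomputable def J (β : ℝ) (k : ℕ) : ℝ := ∫ x, d x * (x ^ k * Real.exp (β * x))

lemma J_nonneg (β : ℝ) (k : ℕ) : 0 ≤ J β k := by
  refine integral_nonneg fun x => ?_
  by_cases hx : 0 < x
  · exact mul_nonneg (d_nonneg x)
      (mul_nonneg (pow_nonneg hx.le k) (Real.exp_pos _).le)
  · have : d x = 0 := by rw [d, if_neg hx]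
    simp [this]

lemma integral_Qmix (g : ℝ → ℝ) (hg : Measurable g)
    (hint : Integrable (fun x => d x * g x) volume) :
    ∫ x, g x ∂Qmix = g 0 / 2 + (∫ x, d x * g x) / 2 := by
  have h1 : Integrable g (Measure.dirac 0) :=
    (integrable_const (g 0)).congr (ae_eq_dirac g).symm
  have h2 : Integrable g expCauchy := (integrable_expCauchy_iff g).mpr hint
  rw [Qmix, integral_add_measure (h1.smul_measure (by norm_num))
      (h2.smul_measure (by norm_num)),
    integral_smul_measure, integral_smul_measure, integral_dirac, integral_expCauchy]
  norm_num
  ring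

lemma int_exp {β : ℝ} (hβ : β < 0) :
    Integrable (fun x => d x * Real.exp (β * x)) volume := by
  refine (int0 hβ).congr (Filter.Eventually.of_forall fun x => ?_)
  simp

lemma Zmix_eq {β : ℝ} (hβ : β < 0) : Zmix β = 1 / 2 + J β 0 / 2 := by
  rw [Zmix, integral_Qmix _ (by fun_prop) (int_exp hβ)]
  have h : J β 0 = ∫ x, d x * Real.exp (β * x) := by
    rw [J]; apply integral_congr_ae; filter_upwards with x; simp
  rw [h]; simp [Real.exp_zero]

lemma J0_le_one {β : ℝ} (hβ : β < 0) : J β 0 ≤ 1 := by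
  rw [← integral_d]
  refine integral_mono (int0 hβ) int_d fun x => ?_
  simp only [pow_zero, one_mul]
  by_cases hx : 0 < x
  · nlinarith [d_nonneg x, Real.exp_le_one_iff.mpr (by nlinarith : β * x ≤ 0)]
  · have : d x = 0 := by rw [d, if_neg hx]
    simp [this]

lemma Zmix_pos {β : ℝ} (hβ : β < 0) : 0 < Zmix β := by
  rw [Zmix_eq hβ]; nlinarith [J_nonneg β 0]

lemma Zmix_le_one {β : ℝ} (hβ : β < 0) : Zmix β ≤ 1 := by
  rw [Zmix_eq hβ]; nlinarith [J0_le_one hβ]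

lemma Zmix_ge {β : ℝ} (hβ : β < 0) : 1 / 2 ≤ Zmix β := by
  rw [Zmix_eq hβ]; nlinarith [J_nonneg β 0]

lemma integral_Qexp {β : ℝ} (hβ : β < 0) (g : ℝ → ℝ) (hg : Measurable g)
    (hint : Integrable (fun x => d x * (Real.exp (β * x) * g x)) volume) :
    ∫ x, g x ∂(Qexp β)
      = (g 0 + ∫ x, d x * (Real.exp (β * x) * g x)) / (2 * Zmix β) := by
  have hZ : 0 < Zmix β := Zmix_pos hβ
  have hd : (fun x : ℝ => ENNReal.ofReal (Real.exp (β * x) / Zmix β))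
      = fun x => ((Real.exp (β * x) / Zmix β).toNNReal : ℝ≥0∞) := rfl
  have hm : Measurable fun x : ℝ => (Real.exp (β * x) / Zmix β).toNNReal :=
    measurable_real_toNNReal.comp (by fun_prop)
  rw [Qexp, hd, integral_withDensity_eq_integral_smul hm g]
  have hs : (fun x => ((Real.exp (β * x) / Zmix β).toNNReal : ℝ≥0) • g x)
      = fun x => (Real.exp (β * x) / Zmix β) * g x := by
    funext x
    rw [NNReal.smul_def, Real.coe_toNNReal _ (by positivity), smul_eq_mul]
  rw [hs, integral_Qmix _ (by fun_prop)]
  · have h0 : Real.exp (β * 0) / Zmix β * g 0 = g 0 / Zmix β := by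
      rw [mul_zero, Real.exp_zero]; ring
    rw [h0]
    have h1 : (fun x => d x * (Real.exp (β * x) / Zmix β * g x))
        = fun x => (Zmix β)⁻¹ * (d x * (Real.exp (β * x) * g x)) := by
      funext x; field_simp [hZ.ne']; try ring
    rw [h1, MeasureTheory.integral_const_mul, div_div, inv_mul_eq_div, div_div,
      ← add_div, mul_comm (Zmix β) 2]
  · refine (hint.const_mul (Zmix β)⁻¹).congr (Filter.Eventually.of_forall fun x => ?_)
    field_simp [hZ.ne']; try ring
lemma d_mom_nonneg {β : ℝ} (t : ℝ) (x : ℝ) :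
    0 ≤ d x * ((x - t) ^ 2 * Real.exp (β * x)) :=
  mul_nonneg (d_nonneg x) (mul_nonneg (sq_nonneg _) (Real.exp_pos _).le)

lemma quad {β : ℝ} (hβ : β < 0) (t : ℝ) :
    0 ≤ J β 2 - 2 * t * J β 1 + t ^ 2 * J β 0 := by
  have key : ∫ x, (d x * (x ^ 2 * Real.exp (β * x))
        - (2 * t) * (d x * (x ^ 1 * Real.exp (β * x)))
        + (t ^ 2) * (d x * (x ^ 0 * Real.exp (β * x))))
      = J β 2 - 2 * t * J β 1 + t ^ 2 * J β 0 := by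
    rw [integral_add (f := fun x => d x * (x ^ 2 * Real.exp (β * x))
          - (2 * t) * (d x * (x ^ 1 * Real.exp (β * x))))
        (g := fun x => (t ^ 2) * (d x * (x ^ 0 * Real.exp (β * x))))
        (((int2 hβ).sub ((int1 hβ).const_mul _))) ((int0 hβ).const_mul _),
      integral_sub (int2 hβ) ((int1 hβ).const_mul _),
      MeasureTheory.integral_const_mul, MeasureTheory.integral_const_mul]
    rfl
  rw [← key]
  refine integral_nonneg fun x => ?_
  have h : d x * (x ^ 2 * Real.exp (β * x))
        - (2 * t) * (d x * (x ^ 1 * Real.exp (β * x)))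
        + (t ^ 2) * (d x * (x ^ 0 * Real.exp (β * x)))
      = d x * ((x - t) ^ 2 * Real.exp (β * x)) := by ring
  rw [h]
  exact d_mom_nonneg t x

lemma J2_ge {β : ℝ} (h1 : -(1/2) ≤ β) (h2 : β < 0) :
    Real.exp (-2) / (3 * Real.pi) / (β ^ 2 * (1 + Real.log (-β) ^ 2)) ≤ J β 2 := by
  have hβpos : 0 < -β := by linarith
  set T : ℝ := (-β)⁻¹ with hTdef
  have hTpos : 0 < T := by positivity
  have hT2 : 2 ≤ T := by
    have h : -β ≤ 1/2 := by linarith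
    have := one_div_le_one_div_of_le hβpos h
    rw [hTdef, inv_eq_one_div]
    linarith
  set L : ℝ := 1 + Real.log (-β) ^ 2 with hLdef
  have hLpos : 0 < L := by positivity
  set κ : ℝ := Real.exp (-2) * T / (3 * Real.pi * L) with hκdef
  -- pointwise bound on Icc T (2*T)
  have hpt : ∀ x ∈ Set.Icc T (2*T), κ ≤ d x * (x ^ 2 * Real.exp (β * x)) := by
    rintro x ⟨hx1, hx2⟩
    have hxpos : 0 < x := lt_of_lt_of_le (by linarith) hx1
    have hex : Real.exp (-2) ≤ Real.exp (β * x) := by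
      apply Real.exp_le_exp.mpr
      have : β * x ≥ β * (2 * T) := mul_le_mul_of_nonpos_left hx2 h2.le
      have hb2T : β * (2 * T) = -2 := by
        rw [hTdef]; rw [show β * (2 * (-β)⁻¹) = -2 * (β * β⁻¹) by ring, mul_inv_cancel₀ h2.ne]; ring
      linarith
    have hlogx0 : 0 ≤ Real.log x := Real.log_nonneg (by linarith)
    have hlog2 : Real.log 2 ≤ 1 := by
      have := Real.log_le_sub_one_of_pos (by norm_num : (0:ℝ) < 2)
      linarith
    have hlog20 : 0 ≤ Real.log 2 := Real.log_nonneg (by norm_num)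
    have hlogT : Real.log T = -Real.log (-β) := by
      rw [hTdef, Real.log_inv]
    have hlogx : Real.log x ≤ Real.log 2 + Real.log T := by
      have h2T : Real.log x ≤ Real.log (2 * T) := Real.log_le_log hxpos hx2
      rwa [Real.log_mul (by norm_num) (by positivity)] at h2T
    have hlogsq : Real.log x ^ 2 ≤ 2 + 2 * Real.log (-β) ^ 2 := by
      have hsq : Real.log x ^ 2 ≤ (Real.log 2 + Real.log T) ^ 2 := by
        apply pow_le_pow_left₀ hlogx0 hlogx
      have hTsq : Real.log T ^ 2 = Real.log (-β) ^ 2 := by rw [hlogT]; ring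
      nlinarith [sq_nonneg (Real.log 2 - Real.log T), sq_nonneg (1 - Real.log T),
        sq_nonneg (Real.log T)]
    have hden : 1 + Real.log x ^ 2 ≤ 3 * L := by
      rw [hLdef]; nlinarith
    have hdx : d x = 1 / (Real.pi * x * (1 + Real.log x ^ 2)) := by
      rw [d, if_pos hxpos]
    have hval : d x * (x ^ 2 * Real.exp (β * x))
        = x * Real.exp (β * x) / (Real.pi * (1 + Real.log x ^ 2)) := by
      rw [hdx]
      have hx0 : x ≠ 0 := hxpos.ne'
      have hd0 : (1:ℝ) + Real.log x ^ 2 ≠ 0 := by positivity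
      field_simp
    rw [hval, hκdef]
    apply div_le_div₀ (mul_nonneg hxpos.le (Real.exp_pos _).le)
    · calc Real.exp (-2) * T ≤ Real.exp (β * x) * T :=
            mul_le_mul_of_nonneg_right hex hTpos.le
        _ ≤ Real.exp (β * x) * x :=
            mul_le_mul_of_nonneg_left hx1 (Real.exp_pos _).le
        _ = x * Real.exp (β * x) := mul_comm _ _
    · positivity
    · nlinarith [Real.pi_pos, hLpos]
  have hIcc : (volume (Set.Icc T (2*T))).toReal = T := by
    rw [Real.volume_Icc, ENNReal.toReal_ofReal (by linarith)]
    ring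
  have hstep : κ * T ≤ ∫ x in Set.Icc T (2*T), d x * (x ^ 2 * Real.exp (β * x)) := by
    have := setIntegral_ge_of_const_le measurableSet_Icc
      (by rw [Real.volume_Icc]; exact ENNReal.ofReal_ne_top) hpt
      ((int2 h2).integrableOn)
    rw [Measure.real, hIcc, smul_eq_mul] at this; linarith
  have hfull : (∫ x in Set.Icc T (2*T), d x * (x ^ 2 * Real.exp (β * x))) ≤ J β 2 := by
    apply setIntegral_le_integral (int2 h2)
    filter_upwards with x
    by_cases hx : 0 < x
    · exact mul_nonneg (d_nonneg x)
        (mul_nonneg (sq_nonneg _) (Real.exp_pos _).le)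
    · have : d x = 0 := by rw [d, if_neg hx]
      simp [this]
  have hfinal : Real.exp (-2) / (3 * Real.pi) / (β ^ 2 * L) = κ * T := by
    rw [hκdef, hTdef]
    have : β ≠ 0 := h2.ne
    field_simp
  rw [hfinal]
  exact le_trans hstep hfull

/-- there is a constant `c > 0` such that for all `-1/2 ≤ β < 0` the
variance `Var(Q_β) = ∫ x² dQ_β - (∫ x dQ_β)²` of `Q_β` satisfies
`Var(Q_β) ≥ c/(β²·(1 + (log(-β))²))`. -/
theorem variance_lower_bound :
    ∃ c : ℝ, 0 < c ∧ ∀ β : ℝ, -(1 / 2) ≤ β → β < 0 →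
      c / (β ^ 2 * (1 + Real.log (-β) ^ 2))
        ≤ (∫ x, x ^ 2 ∂(Qexp β)) - (∫ x, x ∂(Qexp β)) ^ 2 := by
  refine ⟨Real.exp (-2) / (18 * Real.pi), by positivity, fun β h1 h2 => ?_⟩
  set c : ℝ := Real.exp (-2) / (18 * Real.pi) with hcdef
  have hcpos : 0 < c := by positivity
  set Z : ℝ := Zmix β with hZdef
  have hZpos : 0 < Z := Zmix_pos h2
  have hZ1 : Z ≤ 1 := Zmix_le_one h2
  have hZhalf : 1/2 ≤ Z := Zmix_ge h2
  have hJ0 : J β 0 = 2 * Z - 1 := by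
    have := Zmix_eq h2; rw [← hZdef] at this; linarith
  -- the two moments
  have hintA : Integrable (fun x => d x * (Real.exp (β * x) * x ^ 2)) volume := by
    refine (int2 h2).congr (Filter.Eventually.of_forall fun x => ?_); ring
  have hintB : Integrable (fun x => d x * (Real.exp (β * x) * x)) volume := by
    refine (int1 h2).congr (Filter.Eventually.of_forall fun x => ?_); ring
  have hswapA : (∫ x, d x * (Real.exp (β * x) * x ^ 2)) = J β 2 := by
    rw [J]; apply integral_congr_ae; filter_upwards with x; ring
  have hswapB : (∫ x, d x * (Real.exp (β * x) * x)) = J β 1 := by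
    rw [J]; apply integral_congr_ae; filter_upwards with x; ring
  have hA : ∫ x, x ^ 2 ∂(Qexp β) = J β 2 / (2 * Z) := by
    rw [integral_Qexp h2 (fun x => x ^ 2) (by fun_prop) hintA, hswapA, ← hZdef]
    norm_num
  have hB : ∫ x, x ∂(Qexp β) = J β 1 / (2 * Z) := by
    rw [integral_Qexp h2 (fun x => x) (by fun_prop) hintB, hswapB, ← hZdef]
    norm_num
  rw [hA, hB]
  -- arithmetic
  set X : ℝ := β ^ 2 * (1 + Real.log (-β) ^ 2) with hXdef
  have hXpos : 0 < X := by
    have hβ0 : β ≠ 0 := h2.ne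
    have : 0 < β ^ 2 := by positivity
    have : (0:ℝ) < 1 + Real.log (-β) ^ 2 := by positivity
    rw [hXdef]; positivity
  have hJ2 : 6 * c / X ≤ J β 2 := by
    have h6c : Real.exp (-2) / (3 * Real.pi) = 6 * c := by
      rw [hcdef]; field_simp; ring
    have := J2_ge h1 h2
    rw [h6c, ← hXdef] at this
    exact this
  have hJ2nn : 0 ≤ J β 2 := J_nonneg β 2
  set t : ℝ := J β 1 / (2 * Z) with htdef
  have hJ1 : J β 1 = 2 * Z * t := by
    rw [htdef]; field_simp
  have hq := quad h2 t
  rw [hJ1, hJ0] at hq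
  have ht2 : t ^ 2 * (2 * Z + 1) ≤ J β 2 := by nlinarith [hq]
  have hstep2 : t ^ 2 ≤ J β 2 / (2 * Z + 1) := by
    rw [le_div_iff₀ (by linarith)]; linarith
  have hstep3 : J β 2 / (2 * Z) - J β 2 / (2 * Z + 1) = J β 2 / (2 * Z * (2 * Z + 1)) := by
    field_simp
    ring
  have hstep4 : J β 2 / 6 ≤ J β 2 / (2 * Z * (2 * Z + 1)) := by
    apply div_le_div_of_nonneg_left hJ2nn (by nlinarith) (by nlinarith)
  have hstep5 : c / X ≤ J β 2 / 6 := by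
    rw [div_le_div_iff₀ hXpos (by norm_num : (0:ℝ) < 6)]
    have := mul_le_mul_of_nonneg_right hJ2 hXpos.le
    rw [div_mul_cancel₀ _ hXpos.ne'] at this
    linarith
  linarith
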